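/- Let n be a natural number and λ : Fin n → ℝ with λ_j > 0 for all j. Then for every entire function f : ℂⁿ → ℂ (i.e., f is differentiable over ℂ at every point), π^n · |f(0)|² ≤ (∏_j λ_j) · ∫_{ℂⁿ} |f(z)|² e^{−φ₀(z)} dz, where the integral is taken in the extended nonnegative reals [0,∞]. -/

import Mathlib

open scoped ENNReal NNReal

open MeasureTheory Real Set

/-- Lebesgue integral in polar coordinates on `ℝ × ℝ`. -/
theorem my_lintegral_polar (F : ℝ × ℝ → ℝ≥0∞) :
    ∫⁻ p, F p = ∫⁻ p in polarCoord.target, ENNReal.ofReal p.1 * F (polarCoord.symm p) := by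
  set B : ℝ × ℝ → ℝ × ℝ →L[ℝ] ℝ × ℝ := fun p =>
    LinearMap.toContinuousLinearMap (Matrix.toLin (Module.Basis.finTwoProd ℝ) (Module.Basis.finTwoProd ℝ)
      !![cos p.2, -p.1 * sin p.2; sin p.2, p.1 * cos p.2])
  have B_det : ∀ p, (B p).det = p.1 := by
    intro p
    conv_rhs => rw [← one_mul p.1, ← cos_sq_add_sin_sq p.2]
    simp only [B, neg_mul, LinearMap.det_toContinuousLinearMap, LinearMap.det_toLin,
      Matrix.det_fin_two_of, sub_neg_eq_add]
    ring
  calc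
    ∫⁻ p, F p = ∫⁻ p in polarCoord.source, F p := by
      rw [← setLIntegral_univ]
      exact (setLIntegral_congr polarCoord_source_ae_eq_univ).symm
    _ = ∫⁻ p in polarCoord.symm '' polarCoord.target, F p := by
      rw [polarCoord.symm_image_target_eq_source]
    _ = ∫⁻ p in polarCoord.target, ENNReal.ofReal |(B p).det| * F (polarCoord.symm p) := by
      apply lintegral_image_eq_lintegral_abs_det_fderiv_mul volume
        polarCoord.open_target.measurableSet
        (fun p _ => (hasFDerivAt_polarCoord_symm p).hasFDerivWithinAt)
        polarCoord.symm.injOn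
    _ = ∫⁻ p in polarCoord.target, ENNReal.ofReal p.1 * F (polarCoord.symm p) := by
      refine setLIntegral_congr_fun polarCoord.open_target.measurableSet
        (fun p hp => ?_)
      rw [B_det, abs_of_pos hp.1]

/-- Lebesgue integral in polar coordinates on `ℂ`. -/
theorem my_lintegral_polar_complex (F : ℂ → ℝ≥0∞) :
    ∫⁻ z, F z = ∫⁻ p in polarCoord.target, ENNReal.ofReal p.1 * F (Complex.polarCoord.symm p) := by
  have h1 : ∫⁻ z, F z = ∫⁻ p : ℝ × ℝ, F (Complex.measurableEquivRealProd.symm p) := by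
    rw [← MeasurePreserving.lintegral_comp_emb
      (Complex.volume_preserving_equiv_real_prod.symm)
      Complex.measurableEquivRealProd.symm.measurableEmbedding F]
  rw [h1, my_lintegral_polar]
  refine setLIntegral_congr_fun polarCoord.open_target.measurableSet
    (fun p hp => ?_)
  have : Complex.measurableEquivRealProd.symm (polarCoord.symm p) = Complex.polarCoord.symm p := by
    rw [Complex.polarCoord_symm_apply, Complex.measurableEquivRealProd_symm_apply]
    simp [polarCoord, Complex.ext_iff, ← Complex.cos_ofReal_re, ← Complex.sin_ofReal_re]
  rw [this]

theorem my_meanvalue (g : ℂ → ℂ) (hg : Differentiable ℂ g) {r : ℝ} (hr : 0 < r) :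
    ENNReal.ofReal (2 * π) * ((‖g 0‖₊ : ℝ≥0∞)) ^ 2 ≤
      ∫⁻ θ in Ioo (-π) π, ((‖g (circleMap 0 r θ)‖₊ : ℝ≥0∞)) ^ 2 := by
  set h : ℂ → ℂ := fun z => g z * g z with hh
  have hdiff : DiffContOnCl ℂ h (Metric.ball 0 r) :=
    (hg.mul hg).diffContOnCl
  have key : (∮ z in C(0, r), (z - 0)⁻¹ • h z) = (2 * π * Complex.I) • h 0 :=
    hdiff.circleIntegral_sub_inv_smul (by simpa using hr)
  have key2 : (∫ θ in (0)..(2*π), h (circleMap 0 r θ)) = 2 * π * h 0 := by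
    have expand : (∮ z in C(0, r), (z - 0)⁻¹ • h z)
        = Complex.I * ∫ θ in (0)..(2*π), h (circleMap 0 r θ) := by
      rw [circleIntegral, ← intervalIntegral.integral_const_mul]
      congr 1; funext θ
      have hne : circleMap 0 r θ ≠ 0 := circleMap_ne_center hr.ne'
      simp only [deriv_circleMap, sub_zero, smul_eq_mul]
      field_simp
    rw [expand] at key
    have : Complex.I * ∫ θ in (0)..(2*π), h (circleMap 0 r θ)
        = Complex.I * (2 * π * h 0) := by
      rw [key]; simp [smul_eq_mul]; ring
    exact mul_left_cancel₀ Complex.I_ne_zero this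
  -- real inequality
  have step1 : 2 * π * ‖g 0‖ ^ 2 ≤ ∫ θ in (0)..(2*π), ‖g (circleMap 0 r θ)‖ ^ 2 := by
    have h1 : 2 * π * ‖g 0‖ ^ 2 = ‖∫ θ in (0)..(2*π), h (circleMap 0 r θ)‖ := by
      rw [key2]
      simp [hh, norm_mul, sq, Real.pi_nonneg, abs_of_nonneg, mul_assoc]
    rw [h1]
    refine le_trans (intervalIntegral.norm_integral_le_integral_norm (by positivity)) ?_
    refine le_of_eq (intervalIntegral.integral_congr fun θ _ => ?_)
    simp [hh, norm_mul, sq]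
  -- shift the interval
  have per : Function.Periodic (fun θ => ‖g (circleMap 0 r θ)‖ ^ 2) (2 * π) :=
    (periodic_circleMap 0 r).comp fun z => ‖g z‖ ^ 2
  have step2 : (∫ θ in (0)..(2*π), ‖g (circleMap 0 r θ)‖ ^ 2)
      = ∫ θ in (-π)..π, ‖g (circleMap 0 r θ)‖ ^ 2 := by
    have := per.intervalIntegral_add_eq 0 (-π)
    rw [zero_add, show -π + 2*π = π by ring] at this
    rw [this]
  have cont : Continuous fun θ => ‖g (circleMap 0 r θ)‖ ^ 2 :=
    ((hg.continuous.comp (continuous_circleMap 0 r)).norm.pow 2)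
  have step3 : (∫ θ in (-π)..π, ‖g (circleMap 0 r θ)‖ ^ 2)
      = ∫ θ in Ioc (-π) π, ‖g (circleMap 0 r θ)‖ ^ 2 := by
    rw [intervalIntegral.integral_of_le (by linarith [Real.pi_pos])]
  -- pass to lintegral
  have step4 : ENNReal.ofReal (∫ θ in Ioc (-π) π, ‖g (circleMap 0 r θ)‖ ^ 2)
      = ∫⁻ θ in Ioc (-π) π, ((‖g (circleMap 0 r θ)‖₊ : ℝ≥0∞)) ^ 2 := by
    rw [MeasureTheory.ofReal_integral_eq_lintegral_ofReal
      (cont.integrableOn_Ioc)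
      (Filter.Eventually.of_forall fun θ => by positivity)]
    congr 1; funext θ
    rw [← enorm_eq_nnnorm, ← ofReal_norm, ← ENNReal.ofReal_pow (norm_nonneg _)]
  have ioc_ioo : (∫⁻ θ in Ioc (-π) π, ((‖g (circleMap 0 r θ)‖₊ : ℝ≥0∞)) ^ 2)
      = ∫⁻ θ in Ioo (-π) π, ((‖g (circleMap 0 r θ)‖₊ : ℝ≥0∞)) ^ 2 := by
    rw [← MeasureTheory.restrict_Ioo_eq_restrict_Ioc]
  calc ENNReal.ofReal (2 * π) * ((‖g 0‖₊ : ℝ≥0∞)) ^ 2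
      = ENNReal.ofReal (2 * π * ‖g 0‖ ^ 2) := by
        rw [← enorm_eq_nnnorm, ← ofReal_norm, ← ENNReal.ofReal_pow (norm_nonneg _),
          ← ENNReal.ofReal_mul (by positivity)]
    _ ≤ ENNReal.ofReal (∫ θ in Ioc (-π) π, ‖g (circleMap 0 r θ)‖ ^ 2) := by
        apply ENNReal.ofReal_le_ofReal
        rw [← step3, ← step2]; exact step1
    _ = _ := by rw [step4, ioc_ioo]

theorem my_oneDim (lam : ℝ) (hlam : 0 < lam) (g : ℂ → ℂ) (hg : Differentiable ℂ g) :
    ENNReal.ofReal π * (‖g 0‖₊ : ℝ≥0∞) ^ 2 ≤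
      ENNReal.ofReal lam *
        ∫⁻ z : ℂ, (‖g z‖₊ : ℝ≥0∞) ^ 2 * ENNReal.ofReal (Real.exp (-(lam * ‖z‖ ^ 2))) := by
  -- the radial integral
  have rint_int : IntegrableOn (fun r : ℝ => r * Real.exp (-(lam * r ^ 2))) (Ioi 0) := by
    have := integrableOn_rpow_mul_exp_neg_mul_sq hlam (s := 1) (by norm_num)
    refine this.congr_fun (fun r hr => ?_) measurableSet_Ioi
    simp only [rpow_one, neg_mul]
  have rint : ∫ r in Ioi (0:ℝ), r * Real.exp (-(lam * r ^ 2)) = (2 * lam)⁻¹ := by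
    have A : ∀ x : ℝ, HasDerivAt (fun y : ℝ => -(2*lam)⁻¹ * Real.exp (-(lam * y ^ 2)))
        (x * Real.exp (-(lam * x ^ 2))) x := by
      intro x
      have h1 : HasDerivAt (fun y : ℝ => -(lam * y ^ 2)) (-(lam * (2 * x))) x := by
        simpa using ((hasDerivAt_pow 2 x).const_mul lam).fun_neg
      have h2 := h1.exp.const_mul (-(2*lam)⁻¹)
      refine h2.congr_deriv ?_
      have := hlam.ne'
      field_simp
    have B : Filter.Tendsto (fun y : ℝ => -(2*lam)⁻¹ * Real.exp (-(lam * y ^ 2)))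
        Filter.atTop (nhds 0) := by
      rw [show (0:ℝ) = -(2*lam)⁻¹ * 0 by ring]
      apply Filter.Tendsto.const_mul
      apply Real.tendsto_exp_atBot.comp
      exact Filter.tendsto_neg_atTop_atBot.comp
        ((Filter.tendsto_pow_atTop two_ne_zero).const_mul_atTop hlam)
    rw [MeasureTheory.integral_Ioi_of_hasDerivAt_of_tendsto
      (Continuous.continuousWithinAt (by fun_prop)) (fun x _ => A x) rint_int B]
    norm_num
  set C : ℝ≥0∞ := ENNReal.ofReal (2 * π) * ((‖g 0‖₊ : ℝ≥0∞)) ^ 2 with hC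
  set F : ℂ → ℝ≥0∞ := fun z => (‖g z‖₊ : ℝ≥0∞) ^ 2 * ENNReal.ofReal (Real.exp (-(lam * ‖z‖ ^ 2)))
    with hF
  have hcont : Continuous fun p : ℝ × ℝ => (Complex.polarCoord.symm p : ℂ) := by
    have : (fun p : ℝ × ℝ => (Complex.polarCoord.symm p : ℂ))
        = fun p : ℝ × ℝ => (p.1 : ℂ) * (Real.cos p.2 + Real.sin p.2 * Complex.I) := by
      funext p; exact Complex.polarCoord_symm_apply p
    rw [this]; fun_prop
  have hgm : Measurable g := hg.continuous.measurable
  have hmeas : Measurable fun θ : ℝ × ℝ => (‖g (Complex.polarCoord.symm θ)‖₊ : ℝ≥0∞) ^ 2 :=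
    ((measurable_nnnorm.comp (hgm.comp hcont.measurable)).coe_nnreal_ennreal).pow_const 2
  have key : ENNReal.ofReal (2 * lam)⁻¹ * C ≤ ∫⁻ z : ℂ, F z := by
    rw [my_lintegral_polar_complex F,
      show polarCoord.target = Ioi (0:ℝ) ×ˢ Ioo (-π) π from rfl,
      Measure.volume_eq_prod, ← Measure.prod_restrict]
    rw [MeasureTheory.lintegral_prod]
    · have lower : ∀ r : ℝ, ENNReal.ofReal (r * Real.exp (-(lam * r ^ 2))) * C ≤
          ∫⁻ θ in Ioo (-π) π, ENNReal.ofReal r * F (Complex.polarCoord.symm (r, θ)) := by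
        intro r
        rcases le_or_gt r 0 with h | h
        · have : ENNReal.ofReal (r * Real.exp (-(lam * r ^ 2))) = 0 := by
            apply ENNReal.ofReal_eq_zero.2
            exact mul_nonpos_of_nonpos_of_nonneg h (Real.exp_nonneg _)
          rw [this, zero_mul]; exact zero_le
        · have habs : ∀ θ : ℝ, ‖circleMap 0 r θ‖ = r := by
            intro θ
            rw [norm_circleMap_zero, abs_of_pos h]
          have hcirc : ∀ θ : ℝ, Complex.polarCoord.symm (r, θ) = circleMap 0 r θ := by
            intro θ
            rw [Complex.polarCoord_symm_apply, circleMap]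
            simp [Complex.exp_mul_I]
          have : ∀ θ : ℝ, ENNReal.ofReal r * F (Complex.polarCoord.symm (r, θ))
              = ENNReal.ofReal (r * Real.exp (-(lam * r ^ 2)))
                * (‖g (circleMap 0 r θ)‖₊ : ℝ≥0∞) ^ 2 := by
            intro θ
            rw [hF]
            simp only [hcirc, habs]
            rw [ENNReal.ofReal_mul h.le]
            ring
          simp only [this]
          rw [lintegral_const_mul' _ _ ENNReal.ofReal_ne_top]
          exact mul_le_mul_right (my_meanvalue g hg h) _
      calc ENNReal.ofReal (2 * lam)⁻¹ * C
          = (∫⁻ r in Ioi (0:ℝ), ENNReal.ofReal (r * Real.exp (-(lam * r ^ 2)))) * C := by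
            rw [← MeasureTheory.ofReal_integral_eq_lintegral_ofReal rint_int
              ((ae_restrict_iff' measurableSet_Ioi).2 (ae_of_all _ fun r hr => mul_nonneg (le_of_lt hr) (Real.exp_nonneg _))),
              rint]
        _ = ∫⁻ r in Ioi (0:ℝ), ENNReal.ofReal (r * Real.exp (-(lam * r ^ 2))) * C := by
            rw [lintegral_mul_const' _ _ (ENNReal.mul_ne_top ENNReal.ofReal_ne_top (ENNReal.pow_ne_top ENNReal.coe_ne_top))]
        _ ≤ _ := lintegral_mono fun r => lower r
    · apply Measurable.aemeasurable
      simp only [hF]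
      exact (measurable_fst.ennreal_ofReal).mul (hmeas.mul
        ((Real.continuous_exp.comp ((continuous_const.mul (hcont.norm.pow 2)).neg)).measurable.ennreal_ofReal))
  -- final arithmetic
  calc ENNReal.ofReal π * (‖g 0‖₊ : ℝ≥0∞) ^ 2
      = ENNReal.ofReal lam * (ENNReal.ofReal (2 * lam)⁻¹ * C) := by
        rw [hC, ← mul_assoc, ← mul_assoc, ← ENNReal.ofReal_mul hlam.le,
          ← ENNReal.ofReal_mul (by positivity)]
        congr 2
        field_simp
    _ ≤ _ := mul_le_mul_right key _

theorem my_main (n : ℕ) : ∀ (lam : Fin n → ℝ), (∀ j, 0 < lam j) →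
    ∀ (f : (Fin n → ℂ) → ℂ), Differentiable ℂ f →
    ENNReal.ofReal Real.pi ^ n * (‖f 0‖₊ : ℝ≥0∞) ^ 2 ≤
      (∏ j : Fin n, ENNReal.ofReal (lam j)) *
        ∫⁻ z : Fin n → ℂ,
          (‖f z‖₊ : ℝ≥0∞) ^ 2 *
            ENNReal.ofReal (Real.exp (-(∑ j : Fin n, lam j * ‖z j‖ ^ 2))) := by
  induction n with
  | zero =>
    intro lam hlam f hf
    have hz : ∀ z : Fin 0 → ℂ, f z = f 0 := fun z => congrArg f (Subsingleton.elim z 0)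
    simp only [pow_zero, Finset.univ_eq_empty, Finset.prod_empty, Finset.sum_empty, one_mul,
      neg_zero, Real.exp_zero, ENNReal.ofReal_one, mul_one, hz]
    rw [lintegral_const, MeasureTheory.volume_pi, Measure.pi_univ]
    simp
  | succ n ih =>
    intro lam hlam f hf
    have hfm : Measurable f := hf.continuous.measurable
    set lam' : Fin n → ℝ := fun j => lam j.succ with hlam'def
    set S : (Fin n → ℂ) → ℝ := fun y => ∑ j : Fin n, lam' j * ‖y j‖ ^ 2 with hS
    set A : ℂ → (Fin n → ℂ) → ℝ≥0∞ := fun x y =>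
      (‖f (Fin.cons x y)‖₊ : ℝ≥0∞) ^ 2 * ENNReal.ofReal (Real.exp (-(lam 0 * ‖x‖ ^ 2))) with hA
    set G : (Fin (n+1) → ℂ) → ℝ≥0∞ := fun z =>
      (‖f z‖₊ : ℝ≥0∞) ^ 2
        * ENNReal.ofReal (Real.exp (-(∑ j : Fin (n+1), lam j * ‖z j‖ ^ 2))) with hG
    have hGm : Measurable G := by
      apply Measurable.fun_mul
      · exact ((measurable_nnnorm.comp hfm).coe_nnreal_ennreal).pow_const 2
      · apply Measurable.ennreal_ofReal
        apply Real.measurable_exp.comp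
        apply Measurable.neg
        exact Finset.measurable_sum _ fun j _ =>
          (measurable_const.mul ((measurable_norm.comp (measurable_pi_apply j)).pow_const 2))
    have hsymm : ∀ (x : ℂ) (y : Fin n → ℂ),
        (MeasurableEquiv.piFinSuccAbove (fun _ : Fin (n+1) => ℂ) 0).symm (x, y)
          = Fin.cons x y := by
      intro x y; funext i
      induction i using Fin.cases <;> simp [MeasurableEquiv.piFinSuccAbove]
    have hsplit : ∀ (x : ℂ) (y : Fin n → ℂ),
        G (Fin.cons x y) = A x y * ENNReal.ofReal (Real.exp (-(S y))) := by
      intro x y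
      rw [hG]
      simp only [Fin.sum_univ_succ, Fin.cons_zero, Fin.cons_succ]
      rw [neg_add, Real.exp_add, ENNReal.ofReal_mul (Real.exp_nonneg _), hA, hS, hlam'def]
      ring
    have key : (∫⁻ z : Fin (n+1) → ℂ, G z)
        = ∫⁻ y : Fin n → ℂ, (∫⁻ x : ℂ, A x y) * ENNReal.ofReal (Real.exp (-(S y))) := by
      rw [← ((volume_preserving_piFinSuccAbove (fun _ : Fin (n+1) => ℂ) 0).symm _).lintegral_comp hGm]
      have hcomp : Measurable fun a : ℂ × (Fin n → ℂ) =>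
          G ((MeasurableEquiv.piFinSuccAbove (fun _ : Fin (n+1) => ℂ) 0).symm a) :=
        hGm.comp (MeasurableEquiv.measurable _)
      rw [Measure.volume_eq_prod, MeasureTheory.lintegral_prod_symm _ hcomp.aemeasurable]
      refine lintegral_congr fun y => ?_
      simp only [hsymm, hsplit]
      rw [lintegral_mul_const' _ _ ENNReal.ofReal_ne_top]
    have hf' : Differentiable ℂ (fun y : Fin n → ℂ => f (Fin.cons 0 y)) := by
      apply hf.comp
      rw [differentiable_pi]
      intro i
      induction i using Fin.cases with
      | zero => simpa using differentiable_const (0:ℂ)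
      | succ j => simp only [Fin.cons_succ]; exact differentiable_apply j
    have hcons0 : (Fin.cons 0 (0 : Fin n → ℂ) : Fin (n+1) → ℂ) = 0 := by
      funext i
      induction i using Fin.cases <;> simp
    calc ENNReal.ofReal Real.pi ^ (n+1) * (‖f 0‖₊ : ℝ≥0∞) ^ 2
        = ENNReal.ofReal Real.pi
            * (ENNReal.ofReal Real.pi ^ n * (‖f (Fin.cons 0 (0 : Fin n → ℂ))‖₊ : ℝ≥0∞) ^ 2) := by
          rw [hcons0, pow_succ]; ring
      _ ≤ ENNReal.ofReal Real.pi * ((∏ j : Fin n, ENNReal.ofReal (lam' j)) *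
            ∫⁻ y : Fin n → ℂ, (‖f (Fin.cons 0 y)‖₊ : ℝ≥0∞) ^ 2
              * ENNReal.ofReal (Real.exp (-(S y)))) :=
          mul_le_mul_right (ih lam' (fun j => hlam j.succ) _ hf') _
      _ = (∏ j : Fin n, ENNReal.ofReal (lam' j)) *
            ∫⁻ y : Fin n → ℂ, (ENNReal.ofReal Real.pi * (‖f (Fin.cons 0 y)‖₊ : ℝ≥0∞) ^ 2)
              * ENNReal.ofReal (Real.exp (-(S y))) := by
          have h2 : ∫⁻ y : Fin n → ℂ, (ENNReal.ofReal Real.pi * (‖f (Fin.cons 0 y)‖₊ : ℝ≥0∞) ^ 2)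
              * ENNReal.ofReal (Real.exp (-(S y)))
              = ENNReal.ofReal Real.pi * ∫⁻ y : Fin n → ℂ, (‖f (Fin.cons 0 y)‖₊ : ℝ≥0∞) ^ 2
                * ENNReal.ofReal (Real.exp (-(S y))) := by
            simp only [mul_assoc]
            exact lintegral_const_mul' _ _ ENNReal.ofReal_ne_top
          rw [h2]; ring
      _ ≤ (∏ j : Fin n, ENNReal.ofReal (lam' j)) *
            ∫⁻ y : Fin n → ℂ, (ENNReal.ofReal (lam 0) * ∫⁻ x : ℂ, A x y)
              * ENNReal.ofReal (Real.exp (-(S y))) := by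
          refine mul_le_mul_right (lintegral_mono fun y => mul_le_mul_left ?_ _) _
          have h1 : Differentiable ℂ (fun x : ℂ => f (Fin.cons x y)) := by
            apply hf.comp
            rw [differentiable_pi]
            intro i
            induction i using Fin.cases with
            | zero => simp only [Fin.cons_zero]; exact differentiable_id
            | succ j => simp only [Fin.cons_succ]; exact differentiable_const _
          exact my_oneDim (lam 0) (hlam 0) (fun x => f (Fin.cons x y)) h1
      _ = (ENNReal.ofReal (lam 0) * ∏ j : Fin n, ENNReal.ofReal (lam' j)) *
            ∫⁻ y : Fin n → ℂ, (∫⁻ x : ℂ, A x y) * ENNReal.ofReal (Real.exp (-(S y))) := by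
          have h2 : ∫⁻ y : Fin n → ℂ, (ENNReal.ofReal (lam 0) * ∫⁻ x : ℂ, A x y)
              * ENNReal.ofReal (Real.exp (-(S y)))
              = ENNReal.ofReal (lam 0) * ∫⁻ y : Fin n → ℂ, (∫⁻ x : ℂ, A x y)
                * ENNReal.ofReal (Real.exp (-(S y))) := by
            simp only [mul_assoc]
            exact lintegral_const_mul' _ _ ENNReal.ofReal_ne_top
          rw [h2]; ring
      _ = (∏ j : Fin (n+1), ENNReal.ofReal (lam j)) * ∫⁻ z : Fin (n+1) → ℂ, G z := by
          rw [Fin.prod_univ_succ, key]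

/-- Reproducing estimate at the origin for the Fock space with weight
`φ₀(z) = ∑ j, λ j * |z j|²`, `λ j > 0`:
`π^n |f(0)|² ≤ (∏ j, λ j) · ∫_{ℂⁿ} |f|² e^{−φ₀}` for entire `f`. -/
theorem fock_reproducing_estimate (n : ℕ) (lam : Fin n → ℝ) (hlam : ∀ j, 0 < lam j)
    (f : (Fin n → ℂ) → ℂ) (hf : Differentiable ℂ f) :
    ENNReal.ofReal Real.pi ^ n * (‖f 0‖₊ : ℝ≥0∞) ^ 2 ≤
      (∏ j : Fin n, ENNReal.ofReal (lam j)) *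
        ∫⁻ z : Fin n → ℂ,
          (‖f z‖₊ : ℝ≥0∞) ^ 2 *
            ENNReal.ofReal (Real.exp (-(∑ j : Fin n, lam j * ‖z j‖ ^ 2))) :=
  my_main n lam hlam f hf
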